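/- Let K be a positive integer, a ∈ ℝ^K with a_k ≥ 0 for all k and ∑_k a_k = 1, and let 0 < λ < 1/K. Then for every ε > 0 there exists δ₀ > 0 such that for every δ ∈ (0, δ₀) and every z_δ ∈ Δ^K that minimizes F_δ over Δ^K, one has ‖z_δ − z₀‖ < ε; that is, every family of minimizers z_δ converges to the normalized soft-threshold z₀ as δ → 0⁺. (Theorem 3.1 of the paper, quoted from Carmichael 2020.) -/

import Mathlib

open Finset

/-- The term `−a_k log z_k` of the penalized objective, valued in `EReal`:
it is `0` when `a_k = 0`, `+∞` when `z_k = 0` and `a_k ≠ 0`, and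
`−a_k log z_k` otherwise. -/
noncomputable def negLogTerm (a z : ℝ) : EReal :=
  if a = 0 then 0 else if z = 0 then ⊤ else ((-(a * Real.log z) : ℝ) : EReal)

/-- The penalized objective `F_δ(z) = −∑_k a_k log z_k + λ ∑_k log(δ + z_k)`,
valued in `EReal`. -/
noncomputable def Fdelta {K : ℕ} (a : Fin K → ℝ) (lam δ : ℝ) (z : Fin K → ℝ) : EReal :=
  (∑ k, negLogTerm (a k) (z k)) + ((lam * ∑ k, Real.log (δ + z k) : ℝ) : EReal)

/- ## Auxiliary scalar lemmas -/

/-- Quadratic lower bound for `x - 1 - log x` on `(0, M]`. -/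
lemma lemA {M x : ℝ} (hM : 1 ≤ M) (hx : 0 < x) (hxM : x ≤ M) :
    (x-1)^2/(4*M^2) ≤ x - 1 - Real.log x := by
  have hM0 : (0:ℝ) < M := lt_of_lt_of_le one_pos hM
  rcases le_or_gt 1 x with h1 | h1
  · set t := Real.log x with ht
    have ht0 : 0 ≤ t := Real.log_nonneg h1
    have h2 : (1 + t/2)^2 ≤ x := by
      have h := Real.add_one_le_exp (t/2)
      have hsq : (t/2 + 1)^2 ≤ (Real.exp (t/2))^2 :=
        pow_le_pow_left₀ (by linarith) h 2
      have he : (Real.exp (t/2))^2 = Real.exp t := by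
        rw [pow_two, ← Real.exp_add]; ring_nf
      calc (1 + t/2)^2 = (t/2+1)^2 := by ring
        _ ≤ (Real.exp (t/2))^2 := hsq
        _ = Real.exp t := he
        _ = x := Real.exp_log hx
    have h3 : x - 1 ≤ t * M := by
      have h := Real.log_le_sub_one_of_pos (show (0:ℝ) < 1/x by positivity)
      rw [Real.log_div one_ne_zero (ne_of_gt hx), Real.log_one] at h
      have h' : x - 1 ≤ t * x := by
        have h2 := mul_le_mul_of_nonneg_right h (le_of_lt hx)
        have hxne : x ≠ 0 := ne_of_gt hx
        field_simp at h2
        nlinarith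
      nlinarith
    have h4 : x - 1 - t ≥ t^2/4 := by nlinarith
    have h5 : (x-1)^2 ≤ t^2*M^2 := by nlinarith
    rw [div_le_iff₀ (by positivity)]
    nlinarith [sq_nonneg M]
  · have hle : (x-1)^2/(4*M^2) ≤ (1-x)^2/4 := by
      rw [div_le_div_iff₀ (by positivity) (by norm_num)]
      nlinarith [mul_nonneg (sq_nonneg (1-x)) (show (0:ℝ) ≤ M^2 - 1 by nlinarith)]
    refine le_trans hle ?_
    set t := -Real.log x with ht
    have ht0 : 0 ≤ t := by
      rw [ht, neg_nonneg]
      exact Real.log_nonpos (le_of_lt hx) (le_of_lt h1)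
    have htx : 1 - x ≤ t := by
      have := Real.log_le_sub_one_of_pos hx
      simp only [ht]; linarith
    have hgoal : (1-x)^2/4 ≤ x - 1 + t := by
      rcases le_or_gt t 2 with h2 | h2
      · have hexp : (1 - t/2)^2 ≤ x := by
          have h := Real.add_one_le_exp (-(t/2))
          have h0 : 0 ≤ 1 - t/2 := by linarith
          have hsq : (1 - t/2)^2 ≤ (Real.exp (-(t/2)))^2 :=
            pow_le_pow_left₀ h0 (by linarith) 2
          have he : (Real.exp (-(t/2)))^2 = Real.exp (-t) := by
            rw [pow_two, ← Real.exp_add]; ring_nf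
          rw [he] at hsq
          have hex : Real.exp (-t) = x := by
            simp only [ht, neg_neg]; exact Real.exp_log hx
          linarith
        nlinarith
      · have hb : (1-x)^2 ≤ 1 := by nlinarith
        nlinarith
    simp only [ht] at hgoal
    linarith

/-- Two-point concavity of `log`. -/
lemma log_concave2 {α β x y : ℝ} (hx : 0 < x) (hy : 0 < y) (hα : 0 ≤ α) (hβ : 0 ≤ β)
    (hαβ : α + β = 1) :
    α * Real.log x + β * Real.log y ≤ Real.log (α * x + β * y) := by
  have := strictConcaveOn_log_Ioi.concaveOn.2 (Set.mem_Ioi.mpr hx) (Set.mem_Ioi.mpr hy) hα hβ hαβ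
  simpa using this

lemma log_lb {δ t a lam : ℝ} (hδ : 0 < δ) (ht : 0 < t) (ha : 0 < a) (halam : a < lam) :
    (lam - a) * Real.log δ + a * Real.log t
      + (lam * Real.log lam - a * Real.log a - (lam - a) * Real.log (lam - a))
      ≤ lam * Real.log (δ + t) := by
  have hla : 0 < lam - a := by linarith
  have hlam : 0 < lam := by linarith
  have h := log_concave2 (α := (lam - a)/lam) (β := a/lam)
    (x := δ * lam / (lam - a)) (y := t * lam / a)
    (by positivity) (by positivity) (by positivity) (by positivity)
    (by field_simp; ring)
  have hxy : (lam - a)/lam * (δ * lam / (lam - a)) + a/lam * (t * lam / a) = δ + t := by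
    field_simp
  rw [hxy] at h
  have hlx : Real.log (δ * lam / (lam - a)) = Real.log δ + Real.log lam - Real.log (lam - a) := by
    rw [Real.log_div (by positivity) (ne_of_gt hla), Real.log_mul (ne_of_gt hδ) (ne_of_gt hlam)]
  have hly : Real.log (t * lam / a) = Real.log t + Real.log lam - Real.log a := by
    rw [Real.log_div (by positivity) (ne_of_gt ha), Real.log_mul (ne_of_gt ht) (ne_of_gt hlam)]
  rw [hlx, hly] at h
  have h2 := mul_le_mul_of_nonneg_left h (le_of_lt hlam)
  have hl0 : lam ≠ 0 := ne_of_gt hlam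
  field_simp at h2
  nlinarith [h2]

/-- The constant `c_k` appearing in the per-coordinate bounds. -/
noncomputable def ckon (lam a : ℝ) : ℝ :=
  if lam < a then 0
  else lam * Real.log lam - a * Real.log a - (lam - a) * Real.log (lam - a)

/-- Per-coordinate lower bound for the penalized objective. -/
lemma coord_lb {a lam δ t : ℝ} (hlam : 0 < lam) (ha : 0 ≤ a) (hδ : 0 < δ)
    (ht0 : 0 ≤ t) (hpos : 0 < a → 0 < t) :
    max (a - lam) 0 * (-Real.log t) + (lam - min a lam) * Real.log δ + ckon lam a
      ≤ -(a * Real.log t) + lam * Real.log (δ + t) := by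
  rcases lt_or_ge lam a with hS | hS
  · -- lam < a
    have ht : 0 < t := hpos (lt_trans hlam hS)
    have hmax : max (a - lam) 0 = a - lam := max_eq_left (by linarith)
    have hmin : min a lam = lam := min_eq_right (le_of_lt hS)
    have hck : ckon lam a = 0 := if_pos hS
    have hlog : lam * Real.log t ≤ lam * Real.log (δ + t) :=
      mul_le_mul_of_nonneg_left (Real.log_le_log ht (by linarith)) (le_of_lt hlam)
    rw [hmax, hmin, hck]
    ring_nf
    nlinarith [hlog]
  · -- a ≤ lam
    have hmax : max (a - lam) 0 = 0 := max_eq_right (by linarith)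
    have hmin : min a lam = a := min_eq_left hS
    have hck : ckon lam a = lam * Real.log lam - a * Real.log a - (lam - a) * Real.log (lam - a) :=
      if_neg (not_lt.mpr hS)
    rw [hmax, hmin, hck]
    rcases eq_or_lt_of_le ha with ha0 | ha0
    · -- a = 0
      have ha' : a = 0 := ha0.symm
      subst ha'
      have hlog : lam * Real.log δ ≤ lam * Real.log (δ + t) :=
        mul_le_mul_of_nonneg_left (Real.log_le_log hδ (by linarith)) (le_of_lt hlam)
      simp only [zero_mul, neg_zero, sub_zero, Real.log_zero, mul_zero]
      ring_nf
      nlinarith [hlog]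
    · rcases eq_or_lt_of_le hS with halam | halam
      · -- a = lam
        have ht : 0 < t := hpos ha0
        subst halam
        simp only [sub_self, Real.log_zero, zero_mul, mul_zero, sub_zero]
        have hlog : a * Real.log t ≤ a * Real.log (δ + t) :=
          mul_le_mul_of_nonneg_left (Real.log_le_log ht (by linarith)) ha
        ring_nf
        nlinarith [hlog]
      · -- 0 < a < lam
        have ht : 0 < t := hpos ha0
        have h := log_lb hδ ht ha0 halam
        ring_nf
        ring_nf at h
        nlinarith [h]


/-- Coercion of a real finite sum into `EReal`. -/
lemma coe_sum_EReal {ι : Type*} (s : Finset ι) (f : ι → ℝ) :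
    ((∑ k ∈ s, f k : ℝ) : EReal) = ∑ k ∈ s, ((f k : ℝ) : EReal) :=
  map_sum (⟨⟨(Real.toEReal), EReal.coe_zero⟩, fun x y => EReal.coe_add x y⟩ : ℝ →+ EReal) f s

lemma negLogTerm_nonneg {a z : ℝ} (ha : 0 ≤ a) (hz0 : 0 ≤ z) (hz1 : z ≤ 1) :
    0 ≤ negLogTerm a z := by
  unfold negLogTerm
  split_ifs with h1 h2
  · exact le_refl _
  · exact le_top
  · rw [← EReal.coe_zero, EReal.coe_le_coe_iff]
    have := Real.log_nonpos hz0 hz1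
    nlinarith

lemma sum_negLogTerm_top {K : ℕ} {a z : Fin K → ℝ} (ha : ∀ k, 0 ≤ a k) (hz0 : ∀ k, 0 ≤ z k)
    (hz1 : ∀ k, z k ≤ 1) {k : Fin K} (hak : a k ≠ 0) (hzk : z k = 0) :
    ∑ j, negLogTerm (a j) (z j) = ⊤ := by
  rw [← Finset.add_sum_erase _ _ (mem_univ k)]
  have h1 : negLogTerm (a k) (z k) = ⊤ := by
    unfold negLogTerm; rw [if_neg hak, if_pos hzk]
  rw [h1]
  apply EReal.top_add_of_ne_bot
  intro hbot
  have h2 : (0 : EReal) ≤ ∑ j ∈ univ.erase k, negLogTerm (a j) (z j) :=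
    Finset.sum_nonneg fun j _ => negLogTerm_nonneg (ha j) (hz0 j) (hz1 j)
  rw [hbot] at h2
  exact absurd h2 (by simp)

lemma Fdelta_eq_coe {K : ℕ} {a z : Fin K → ℝ} {lam δ : ℝ}
    (h : ∀ k, a k = 0 ∨ 0 < z k) :
    Fdelta a lam δ z
      = ((( ∑ k, (-(a k * Real.log (z k)))) + lam * ∑ k, Real.log (δ + z k) : ℝ) : EReal) := by
  unfold Fdelta
  have hterm : ∀ k, negLogTerm (a k) (z k) = ((-(a k * Real.log (z k)) : ℝ) : EReal) := by
    intro k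
    rcases h k with h0 | hp
    · unfold negLogTerm; rw [if_pos h0, h0]; norm_num
    · unfold negLogTerm
      split_ifs with h1 h2
      · rw [h1]; norm_num
      · exact absurd h2 (ne_of_gt hp)
      · rfl
  rw [EReal.coe_add, coe_sum_EReal]
  congr 1
  exact Finset.sum_congr rfl fun k _ => hterm k

lemma coord_ub_lt {lam a δ : ℝ} (hδ : 0 < δ) (ha : 0 < a) (h : a < lam) :
    -(a*Real.log (δ*(a/(lam-a)))) + lam*Real.log (δ + δ*(a/(lam-a)))
      = (lam - a)*Real.log δ
        + (lam*Real.log lam - a*Real.log a - (lam-a)*Real.log (lam-a)) := by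
  have hla : 0 < lam - a := by linarith
  have hlam : 0 < lam := by linarith
  have e1 : δ + δ*(a/(lam-a)) = δ*lam/(lam-a) := by field_simp; ring
  rw [e1, Real.log_mul (ne_of_gt hδ) (by positivity),
    Real.log_div (ne_of_gt ha) (ne_of_gt hla),
    Real.log_div (by positivity : δ*lam ≠ 0) (ne_of_gt hla),
    Real.log_mul (ne_of_gt hδ) (ne_of_gt hlam)]
  ring

lemma coord_ub_eqcase {lam δ : ℝ} (hδ : 0 < δ) (hlam : 0 < lam) :
    -(lam*Real.log (Real.sqrt δ)) + lam*Real.log (δ + Real.sqrt δ) ≤ lam*Real.sqrt δ := by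
  have hsδ : 0 < Real.sqrt δ := Real.sqrt_pos.mpr hδ
  have e0 : Real.sqrt δ ^ 2 = δ := Real.sq_sqrt hδ.le
  have e1 : δ + Real.sqrt δ = Real.sqrt δ * (Real.sqrt δ + 1) := by linear_combination -e0
  rw [e1, Real.log_mul (ne_of_gt hsδ) (by positivity)]
  have e3 : Real.log (Real.sqrt δ + 1) ≤ Real.sqrt δ := by
    have := Real.log_le_sub_one_of_pos (show 0 < Real.sqrt δ + 1 by positivity)
    linarith
  nlinarith [mul_le_mul_of_nonneg_left e3 hlam.le]

lemma coord_ub_S {lam a δ τ p sb : ℝ} (hδ : 0 < δ) (hlam : 0 < lam) (h : lam < a) (ha1 : a ≤ 1)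
    (hp : 0 < p) (hτ0 : 0 ≤ τ) (hτ : τ ≤ 1/2) (hsb : δ/p ≤ sb) :
    -(a*Real.log ((1-τ)*p)) + lam*Real.log (δ + (1-τ)*p)
      ≤ (a-lam)*(-(Real.log p)) + 2*τ + lam*sb := by
  have h1τ : (0:ℝ) < 1-τ := by linarith
  have e2 : Real.log ((1-τ)*p) = Real.log (1-τ) + Real.log p :=
    Real.log_mul (ne_of_gt h1τ) (ne_of_gt hp)
  have h2 : lam*Real.log (δ + (1-τ)*p) ≤ lam*Real.log (δ + p) := by
    apply mul_le_mul_of_nonneg_left _ hlam.le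
    apply Real.log_le_log (by positivity)
    nlinarith
  have h3 : Real.log (δ + p) ≤ Real.log p + δ/p := by
    have h3a := Real.log_le_sub_one_of_pos (show 0 < (δ + p)/p by positivity)
    rw [Real.log_div (by positivity) (ne_of_gt hp)] at h3a
    have h3b : (δ + p)/p - 1 = δ/p := by field_simp; ring
    linarith
  have h3' : lam*Real.log (δ + p) ≤ lam*(Real.log p + δ/p) :=
    mul_le_mul_of_nonneg_left h3 hlam.le
  have h4 : -(a*Real.log (1-τ)) ≤ 2*τ := by
    have h4a := Real.log_le_sub_one_of_pos (show 0 < 1/(1-τ) by positivity)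
    rw [Real.log_div one_ne_zero (ne_of_gt h1τ), Real.log_one] at h4a
    have h4b : 1/(1-τ) ≤ 2*τ + 1 := by
      rw [div_le_iff₀ h1τ]; nlinarith
    have h4c : Real.log (1-τ) ≤ 0 := Real.log_nonpos (by linarith) (by linarith)
    nlinarith [hlam.trans h]
  have h5 : lam*(δ/p) ≤ lam*sb := mul_le_mul_of_nonneg_left hsb hlam.le
  rw [e2]
  nlinarith [h2, h3', h4, h5]

lemma pinsker_coord {s bk zk pk : ℝ} (hs : 0 < s) (hbk : 0 < bk) (hbks : bk ≤ s)
    (hzk : 0 < zk) (hzk1 : zk ≤ 1) (hpk : pk = bk/s) :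
    (bk - s*zk) + bk*(zk-pk)^2/4 ≤ bk*(Real.log pk - Real.log zk) := by
  have hp : 0 < pk := by rw [hpk]; positivity
  have hM1 : (1:ℝ) ≤ s/bk := (one_le_div hbk).mpr hbks
  have hx : 0 < zk/pk := by positivity
  have hxM : zk/pk ≤ s/bk := by
    rw [hpk, div_div_eq_mul_div]
    gcongr
    nlinarith
  have hA := lemA hM1 hx hxM
  have hlog : Real.log (zk/pk) = Real.log zk - Real.log pk :=
    Real.log_div (ne_of_gt hzk) (ne_of_gt hp)
  rw [hlog] at hA
  have e1 : bk*(zk/pk - 1) = s*zk - bk := by rw [hpk]; field_simp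
  have e2 : bk*((zk/pk - 1)^2/(4*(s/bk)^2)) = bk*(zk-pk)^2/4 := by
    rw [hpk]; field_simp [ne_of_gt hbk, ne_of_gt hs]
  have hmul := mul_le_mul_of_nonneg_left hA hbk.le
  have e3 : bk*(zk/pk - 1 - (Real.log zk - Real.log pk))
      = bk*(zk/pk - 1) - bk*(Real.log zk - Real.log pk) := by ring
  rw [e3, e1, e2] at hmul
  linarith only [hmul]

set_option maxHeartbeats 4000000 in
/-- Theorem 3.1: for `a ∈ Δ^K` and `0 < λ < 1/K`, every family of minimizers
`z_δ` of `F_δ` over the simplex converges, as `δ → 0⁺`, to the normalized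
soft-threshold `z₀` with `z₀_k = (a_k − λ)₊ / ∑_j (a_j − λ)₊`. -/
theorem log_penalty_minimizers_converge {K : ℕ} (hK : 0 < K)
    (a : Fin K → ℝ) (ha0 : ∀ k, 0 ≤ a k) (ha1 : ∑ k, a k = 1)
    (lam : ℝ) (hlam0 : 0 < lam) (hlam1 : lam < 1 / (K : ℝ))
    (z₀ : Fin K → ℝ)
    (hz₀ : ∀ k, z₀ k = max (a k - lam) 0 / ∑ j, max (a j - lam) 0) :
    ∀ ε > 0, ∃ δ₀ > 0, ∀ δ : ℝ, 0 < δ → δ < δ₀ →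
      ∀ zδ : Fin K → ℝ, (∀ k, 0 ≤ zδ k) → (∑ k, zδ k = 1) →
        (∀ z : Fin K → ℝ, (∀ k, 0 ≤ z k) → (∑ k, z k = 1) →
          Fdelta a lam δ zδ ≤ Fdelta a lam δ z) →
        ‖zδ - z₀‖ < ε := by
  intro ε hε
  classical
  set b : Fin K → ℝ := fun k => max (a k - lam) 0 with hb_def
  have hbnn : ∀ k, 0 ≤ b k := fun k => le_max_right _ _
  set s : ℝ := ∑ k, b k with hs_def
  have hKpos : (0:ℝ) < K := Nat.cast_pos.mpr hK
  have haK : ∀ k, a k ≤ 1 := by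
    intro k
    calc a k ≤ ∑ j, a j := Finset.single_le_sum (fun j _ => ha0 j) (mem_univ k)
    _ = 1 := ha1
  have hex : ∃ k, lam < a k := by
    by_contra h
    push_neg at h
    have h2 : (1:ℝ) ≤ ∑ _k : Fin K, lam := ha1 ▸ Finset.sum_le_sum (fun k _ => h k)
    rw [Finset.sum_const, card_univ, Fintype.card_fin, nsmul_eq_mul] at h2
    rw [lt_div_iff₀ hKpos] at hlam1
    nlinarith
  obtain ⟨k₀, hk₀⟩ := hex
  have hs : 0 < s := by
    have h1 : b k₀ ≤ s := Finset.single_le_sum (fun j _ => hbnn j) (mem_univ k₀)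
    have h2 : 0 < b k₀ := lt_max_iff.mpr (Or.inl (by linarith))
    linarith
  have hz₀k : ∀ k, z₀ k = b k / s := fun k => hz₀ k
  have hz₀nn : ∀ k, 0 ≤ z₀ k := fun k => (hz₀k k) ▸ div_nonneg (hbnn k) (le_of_lt hs)
  set S : Finset (Fin K) := univ.filter (fun k => lam < a k) with hS_def
  have hSmem : ∀ k, k ∈ S ↔ lam < a k := fun k => by simp [hS_def]
  have hSne : S.Nonempty := ⟨k₀, (hSmem k₀).mpr hk₀⟩
  have hbposS : ∀ k ∈ S, 0 < b k := fun k hk =>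
    lt_max_iff.mpr (Or.inl (by linarith [(hSmem k).mp hk]))
  have hb0 : ∀ k, k ∉ S → b k = 0 := by
    intro k hk
    have : a k ≤ lam := not_lt.mp (fun h => hk ((hSmem k).mpr h))
    exact max_eq_right (by linarith)
  have hbS : ∑ k ∈ S, b k = s :=
    Finset.sum_subset (Finset.subset_univ S) (fun k _ hk => hb0 k hk)
  have hble : ∀ k, b k ≤ s := fun k => Finset.single_le_sum (fun j _ => hbnn j) (mem_univ k)
  set bS : ℝ := S.inf' hSne b with hbS_def
  have hbS0 : 0 < bS := (Finset.lt_inf'_iff hSne).mpr (fun k hk => hbposS k hk)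
  have hbSle : ∀ k ∈ S, bS ≤ b k := fun k hk => Finset.inf'_le b hk
  set U : ℝ := ∑ k, (if a k < lam then a k / (lam - a k) else 0) with hU_def
  have hU : 0 ≤ U := Finset.sum_nonneg fun k _ => by
    split_ifs with h
    · exact div_nonneg (ha0 k) (by linarith)
    · exact le_refl 0
  set Binv : ℝ := ∑ k ∈ S, 1 / b k with hBinv_def
  have hBinvnn : 0 ≤ Binv := Finset.sum_nonneg fun k hk => by
    have := hbposS k hk; positivity
  set CC : ℝ := K*lam + 2*K*((K:ℝ)+U) + lam*s*Binv with hCC_def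
  have hCC : 0 ≤ CC := by positivity
  set η : ℝ := min (bS*ε^2/8) (s*ε/2) with hη_def
  have hηpos : 0 < η := lt_min (by positivity) (by positivity)
  refine ⟨min 1 (min ((1/(2*((K:ℝ)+U+1)))^2) ((η/(CC+1))^2)),
    lt_min one_pos (lt_min (by positivity) (by positivity)), ?_⟩
  intro δ hδ hδ₀ zδ hznn hzsum hmin
  have hδ1 : δ < 1 := lt_of_lt_of_le hδ₀ (min_le_left _ _)
  have hsq1 : Real.sqrt δ < 1/(2*((K:ℝ)+U+1)) := by
    rw [Real.sqrt_lt' (by positivity)]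
    exact lt_of_lt_of_le hδ₀ (le_trans (min_le_right _ _) (min_le_left _ _))
  have hsq2 : Real.sqrt δ < η/(CC+1) := by
    rw [Real.sqrt_lt' (by positivity)]
    exact lt_of_lt_of_le hδ₀ (le_trans (min_le_right _ _) (min_le_right _ _))
  have hsqnn : 0 ≤ Real.sqrt δ := Real.sqrt_nonneg δ
  have hδsq : δ ≤ Real.sqrt δ := by
    nth_rewrite 1 [← Real.sqrt_sq (le_of_lt hδ)]
    exact Real.sqrt_le_sqrt (by nlinarith)
  -- test point
  set τ : ℝ := ∑ k, (if lam < a k then 0 else if a k = lam then Real.sqrt δ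
      else δ * (a k / (lam - a k))) with hτ_def
  have hτnn : 0 ≤ τ := Finset.sum_nonneg fun k _ => by
    split_ifs with h1 h2
    · exact le_refl 0
    · exact hsqnn
    · have h3 : a k < lam := lt_of_le_of_ne (not_lt.mp h1) h2
      have h4 := ha0 k
      have h5 : 0 < lam - a k := by linarith
      positivity
  have hτKU : τ ≤ ((K:ℝ)+U) * Real.sqrt δ := by
    have hterm : ∀ k, (if lam < a k then 0 else if a k = lam then Real.sqrt δ
        else δ * (a k / (lam - a k)))
        ≤ Real.sqrt δ + δ * (if a k < lam then a k / (lam - a k) else 0) := by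
      intro k
      rcases lt_trichotomy (a k) lam with h | h | h
      · rw [if_neg (by linarith), if_neg (ne_of_lt h), if_pos h]
        linarith
      · rw [if_neg (by linarith), if_pos h, if_neg (by linarith)]
        nlinarith
      · rw [if_pos h, if_neg (by linarith)]
        positivity
    have h1 : τ ≤ ∑ k, (Real.sqrt δ + δ * (if a k < lam then a k / (lam - a k) else 0)) :=
      Finset.sum_le_sum fun k _ => hterm k
    have h2 : ∑ k, (Real.sqrt δ + δ * (if a k < lam then a k / (lam - a k) else 0))
        = (K:ℝ) * Real.sqrt δ + δ * U := by
      rw [Finset.sum_add_distrib, Finset.sum_const, card_univ, Fintype.card_fin,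
        nsmul_eq_mul, ← Finset.mul_sum, hU_def]
    have h3 : δ * U ≤ Real.sqrt δ * U := mul_le_mul_of_nonneg_right hδsq hU
    nlinarith
  have hτhalf : τ ≤ 1/2 := by
    have h2 : ((K:ℝ)+U)*Real.sqrt δ ≤ ((K:ℝ)+U)*(1/(2*((K:ℝ)+U+1))) :=
      mul_le_mul_of_nonneg_left (le_of_lt hsq1) (by positivity)
    have h3 : ((K:ℝ)+U)*(1/(2*((K:ℝ)+U+1))) ≤ 1/2 := by
      rw [mul_one_div, div_le_div_iff₀ (by positivity) (by norm_num)]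
      nlinarith
    linarith
  set w : Fin K → ℝ := fun k => if lam < a k then (1-τ)*z₀ k
      else if a k = lam then Real.sqrt δ else δ * (a k / (lam - a k)) with hw_def
  have hwnn : ∀ k, 0 ≤ w k := by
    intro k
    simp only [hw_def]
    rcases lt_trichotomy (a k) lam with h | h | h
    · rw [if_neg (by linarith), if_neg (ne_of_lt h)]
      have h4 := ha0 k
      have h5 : 0 < lam - a k := by linarith
      positivity
    · rw [if_neg (by linarith), if_pos h]; exact hsqnn
    · rw [if_pos h]
      have := hz₀nn k
      nlinarith
  have hwsum : ∑ k, w k = 1 := by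
    have hsplit : ∀ k, w k = (if lam < a k then (1-τ)*z₀ k else 0)
        + (if lam < a k then 0 else if a k = lam then Real.sqrt δ
            else δ * (a k / (lam - a k))) := by
      intro k
      by_cases h : lam < a k <;> simp [hw_def, h]
    rw [Finset.sum_congr rfl (fun k _ => hsplit k), Finset.sum_add_distrib]
    have e1 : ∑ k, (if lam < a k then (1-τ)*z₀ k else 0) = 1 - τ := by
      rw [← Finset.sum_filter, ← hS_def, ← Finset.mul_sum]
      have hz₀S : ∑ k ∈ S, z₀ k = 1 := by
        rw [Finset.sum_congr rfl (fun k _ => hz₀k k), ← Finset.sum_div, hbS,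
          div_self (ne_of_gt hs)]
      rw [hz₀S, mul_one]
    rw [e1, ← hτ_def]
    ring
  have hwpos : ∀ k, 0 < a k → 0 < w k := by
    intro k hak
    simp only [hw_def]
    rcases lt_trichotomy (a k) lam with h | h | h
    · rw [if_neg (by linarith), if_neg (ne_of_lt h)]
      have h5 : 0 < lam - a k := by linarith
      positivity
    · rw [if_neg (by linarith), if_pos h]
      exact Real.sqrt_pos.mpr hδ
    · rw [if_pos h]
      have h6 : 0 < z₀ k := by
        rw [hz₀k k]
        have := hbposS k ((hSmem k).mpr h)
        positivity
      nlinarith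
  -- bridge to real values
  have hwcond : ∀ k, a k = 0 ∨ 0 < w k := fun k => (eq_or_lt_of_le (ha0 k)).imp Eq.symm (hwpos k)
  have hminw := hmin w hwnn hwsum
  rw [Fdelta_eq_coe hwcond] at hminw
  have hzδ1 : ∀ k, zδ k ≤ 1 := by
    intro k
    rw [← hzsum]
    exact Finset.single_le_sum (fun j _ => hznn j) (mem_univ k)
  have hzδpos : ∀ k, 0 < a k → 0 < zδ k := by
    intro k hak
    rcases eq_or_lt_of_le (hznn k) with h0 | h
    swap
    · exact h
    exfalso
    have htop : ∑ j, negLogTerm (a j) (zδ j) = ⊤ :=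
      sum_negLogTerm_top ha0 hznn hzδ1 (ne_of_gt hak) h0.symm
    have htop2 : Fdelta a lam δ zδ = ⊤ := by
      unfold Fdelta
      rw [htop]
      exact EReal.top_add_coe _
    rw [htop2, top_le_iff] at hminw
    exact absurd hminw (EReal.coe_ne_top _)
  have hzcond : ∀ k, a k = 0 ∨ 0 < zδ k := fun k => (eq_or_lt_of_le (ha0 k)).imp Eq.symm (hzδpos k)
  rw [Fdelta_eq_coe hzcond] at hminw
  have hminR : (∑ k, (-(a k * Real.log (zδ k)))) + lam * ∑ k, Real.log (δ + zδ k)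
      ≤ (∑ k, (-(a k * Real.log (w k)))) + lam * ∑ k, Real.log (δ + w k) :=
    EReal.coe_le_coe_iff.mp hminw
  -- lower and upper bounds
  set Hδv : ℝ := ∑ k, b k * (-(Real.log (zδ k))) with hHδv_def
  set H₀v : ℝ := ∑ k, b k * (-(Real.log (z₀ k))) with hH₀v_def
  set L : ℝ := ∑ k, (lam - min (a k) lam) with hL_def
  set C : ℝ := ∑ k, ckon lam (a k) with hC_def
  set R : ℝ := (K:ℝ)*(2*τ + lam*Real.sqrt δ) + lam*δ*s*Binv with hR_def
  have hlower : Hδv + L * Real.log δ + C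
      ≤ (∑ k, (-(a k * Real.log (zδ k)))) + lam * ∑ k, Real.log (δ + zδ k) := by
    have e1 : Hδv + L * Real.log δ + C
        = ∑ k, (b k * (-(Real.log (zδ k))) + (lam - min (a k) lam) * Real.log δ
            + ckon lam (a k)) := by
      rw [Finset.sum_add_distrib, Finset.sum_add_distrib, ← Finset.sum_mul]
    have e2 : (∑ k, (-(a k * Real.log (zδ k)))) + lam * ∑ k, Real.log (δ + zδ k)
        = ∑ k, ((-(a k * Real.log (zδ k))) + lam * Real.log (δ + zδ k)) := by
      rw [Finset.mul_sum, Finset.sum_add_distrib]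
    rw [e1, e2]
    exact Finset.sum_le_sum fun k _ => coord_lb hlam0 (ha0 k) hδ (hznn k) (hzδpos k)
  have hupper : (∑ k, (-(a k * Real.log (w k)))) + lam * ∑ k, Real.log (δ + w k)
      ≤ H₀v + L * Real.log δ + C + R := by
    have hterm : ∀ k, (-(a k * Real.log (w k))) + lam * Real.log (δ + w k)
        ≤ b k * (-(Real.log (z₀ k))) + (lam - min (a k) lam) * Real.log δ + ckon lam (a k)
          + ((2*τ + lam*Real.sqrt δ) + lam*δ*s*(if lam < a k then 1/b k else 0)) := by
      intro k
      have hextra2 : (0:ℝ) ≤ lam*Real.sqrt δ := mul_nonneg hlam0.le hsqnn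
      by_cases hA0 : a k = 0
      · have hwk : w k = 0 := by
          simp [hw_def, hA0, hlam0.not_gt, ne_of_lt hlam0]
        have hbk0 : b k = 0 := by
          simp only [hb_def]
          rw [hA0]
          exact max_eq_right (by linarith)
        rw [hwk, hA0, hbk0]
        have hck : ckon lam 0 = 0 := by
          simp [ckon, hlam0.not_gt, Real.log_zero]
        rw [hck, if_neg hlam0.not_gt]
        have hm : min (0:ℝ) lam = 0 := min_eq_left hlam0.le
        rw [hm]
        simp only [zero_mul, neg_zero, zero_add, add_zero, mul_zero, sub_zero]
        linarith [hτnn, hextra2]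
      have hA : 0 < a k := lt_of_le_of_ne (ha0 k) (Ne.symm hA0)
      rcases lt_trichotomy (a k) lam with h | h | h
      · -- 0 < a k < lam
        have hla : 0 < lam - a k := by linarith
        have hmina : min (a k) lam = a k := min_eq_left (le_of_lt h)
        have hbk0 : b k = 0 := hb0 k (fun hk => absurd ((hSmem k).mp hk) (by linarith))
        have hck : ckon lam (a k)
            = lam * Real.log lam - a k * Real.log (a k) - (lam - a k) * Real.log (lam - a k) :=
          if_neg (not_lt.mpr (le_of_lt h))
        have hwk : w k = δ * (a k / (lam - a k)) := by
          simp only [hw_def]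
          rw [if_neg (by linarith), if_neg (ne_of_lt h)]
        have hkey := coord_ub_lt hδ hA h
        rw [hwk, hbk0, hmina, hck, if_neg (not_lt.mpr (le_of_lt h))]
        linarith only [hkey.le, hτnn, hextra2]
      · -- a k = lam
        have hwk : w k = Real.sqrt δ := by
          simp only [hw_def]
          rw [if_neg (by linarith), if_pos h]
        have hbk0 : b k = 0 := hb0 k (fun hk => absurd ((hSmem k).mp hk) (by linarith))
        have hck : ckon lam (a k) = 0 := by
          rw [h]
          simp [ckon, lt_irrefl, Real.log_zero]
        have hkey := coord_ub_eqcase hδ hlam0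
        rw [hwk, hbk0, hck, if_neg (not_lt.mpr (le_of_eq h)), h, min_self]
        linarith only [hkey, hτnn]
      · -- lam < a k
        have hkS : k ∈ S := (hSmem k).mpr h
        have hbk : 0 < b k := hbposS k hkS
        have hp : 0 < z₀ k := by
          rw [hz₀k k]
          have := hbposS k hkS
          positivity
        have hbk_eq : b k = a k - lam := max_eq_left (by linarith)
        have hwk : w k = (1-τ)*z₀ k := by
          simp only [hw_def]; rw [if_pos h]
        have hsb : δ/(z₀ k) = δ*s/b k := by rw [hz₀k k, div_div_eq_mul_div]
        have hkey := coord_ub_S hδ hlam0 h (haK k) hp hτnn hτhalf (le_of_eq hsb)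
        have hmin2 : min (a k) lam = lam := min_eq_right (le_of_lt h)
        have hck : ckon lam (a k) = 0 := if_pos h
        have heq : lam*(δ*s/b k) = lam*δ*s*(1/b k) := by ring
        have heq2 : b k * (-Real.log (z₀ k)) = (a k - lam)*(-(Real.log (z₀ k))) := by
          rw [hbk_eq]
        rw [hwk, hmin2, hck, if_pos h]
        linarith only [hkey, hextra2, heq, heq2]
    have hsum := Finset.sum_le_sum fun k (_ : k ∈ univ) => hterm k
    have eL : (∑ k, (-(a k * Real.log (w k)))) + lam * ∑ k, Real.log (δ + w k)
        = ∑ k, ((-(a k * Real.log (w k))) + lam * Real.log (δ + w k)) := by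
      rw [Finset.mul_sum, Finset.sum_add_distrib]
    have eR : ∑ k, (b k * (-(Real.log (z₀ k))) + (lam - min (a k) lam) * Real.log δ
          + ckon lam (a k)
          + ((2*τ + lam*Real.sqrt δ) + lam*δ*s*(if lam < a k then 1/b k else 0)))
        = H₀v + L * Real.log δ + C + R := by
      rw [Finset.sum_add_distrib, Finset.sum_add_distrib, Finset.sum_add_distrib,
        Finset.sum_add_distrib]
      have c1 : ∑ _k : Fin K, (2*τ + lam*Real.sqrt δ) = (K:ℝ)*(2*τ + lam*Real.sqrt δ) := by
        rw [Finset.sum_const, card_univ, Fintype.card_fin, nsmul_eq_mul]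
      have c2 : ∑ k, (lam*δ*s*(if lam < a k then 1/b k else 0)) = lam*δ*s*Binv := by
        rw [← Finset.mul_sum]
        congr 1
        rw [hBinv_def, hS_def, Finset.sum_filter]
      have c3 : ∑ k, ((lam - min (a k) lam) * Real.log δ) = L * Real.log δ := by
        rw [← Finset.sum_mul]
      rw [c1, c2, c3, hR_def]
    rw [eL]
    calc ∑ k, ((-(a k * Real.log (w k))) + lam * Real.log (δ + w k))
        ≤ ∑ k, (b k * (-(Real.log (z₀ k))) + (lam - min (a k) lam) * Real.log δ
            + ckon lam (a k)
            + ((2*τ + lam*Real.sqrt δ) + lam*δ*s*(if lam < a k then 1/b k else 0))) := hsum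
      _ = H₀v + L * Real.log δ + C + R := eR
  have hH : Hδv ≤ H₀v + R := by linarith only [hlower, hupper, hminR]
  -- Pinsker-type step
  have hHδS : Hδv = ∑ k ∈ S, b k * (-(Real.log (zδ k))) :=
    (Finset.sum_subset (Finset.subset_univ S) (fun k _ hk => by rw [hb0 k hk, zero_mul])).symm
  have hH₀S : H₀v = ∑ k ∈ S, b k * (-(Real.log (z₀ k))) :=
    (Finset.sum_subset (Finset.subset_univ S) (fun k _ hk => by rw [hb0 k hk, zero_mul])).symm
  set t : ℝ := ∑ k ∈ S, zδ k with ht_def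
  set Q : ℝ := ∑ k ∈ S, b k * (zδ k - z₀ k)^2/4 with hQ_def
  have hkey : ∀ k ∈ S, (b k - s * zδ k) + b k * (zδ k - z₀ k)^2/4
      ≤ b k * (Real.log (z₀ k) - Real.log (zδ k)) := by
    intro k hk
    have hak : lam < a k := (hSmem k).mp hk
    exact pinsker_coord hs (hbposS k hk) (hble k) (hzδpos k (by linarith)) (hzδ1 k) (hz₀k k)
  have hsumkey := Finset.sum_le_sum hkey
  have eK1 : ∑ k ∈ S, ((b k - s * zδ k) + b k * (zδ k - z₀ k)^2/4) = (s - s*t) + Q := by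
    rw [Finset.sum_add_distrib, Finset.sum_sub_distrib, hbS, ← Finset.mul_sum]
  have eK2 : ∑ k ∈ S, (b k * (Real.log (z₀ k) - Real.log (zδ k))) = Hδv - H₀v := by
    rw [hHδS, hH₀S, ← Finset.sum_sub_distrib]
    exact Finset.sum_congr rfl fun k _ => by ring
  rw [eK1, eK2] at hsumkey
  -- R < η
  have hRη : R < η := by
    have f1 : (K:ℝ)*(2*τ) ≤ (K:ℝ)*(2*(((K:ℝ)+U) * Real.sqrt δ)) :=
      mul_le_mul_of_nonneg_left (by linarith only [hτKU]) hKpos.le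
    have f2 : lam*δ*s*Binv ≤ lam*Real.sqrt δ*s*Binv := by
      have g1 : lam*δ ≤ lam*Real.sqrt δ := mul_le_mul_of_nonneg_left hδsq hlam0.le
      exact mul_le_mul_of_nonneg_right (mul_le_mul_of_nonneg_right g1 hs.le) hBinvnn
    have f3 : Real.sqrt δ * (CC+1) < η := (lt_div_iff₀ (by positivity)).mp hsq2
    have f4 : CC*Real.sqrt δ
        = (K:ℝ)*lam*Real.sqrt δ + 2*(K:ℝ)*((K:ℝ)+U)*Real.sqrt δ + lam*s*Binv*Real.sqrt δ := by
      rw [hCC_def]; ring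
    have f5 : R = (K:ℝ)*(2*τ + lam*Real.sqrt δ) + lam*δ*s*Binv := hR_def
    linarith only [f1, f2, f3, f4, f5, hsqnn]
  have hRle : (s - s*t) + Q ≤ R := by linarith only [hsumkey, hH]
  have htle : t ≤ 1 := by
    rw [ht_def, ← hzsum]
    exact Finset.sum_le_sum_of_subset_of_nonneg (Finset.subset_univ S) (fun k _ _ => hznn k)
  have hQnn : 0 ≤ Q := by
    rw [hQ_def]
    exact Finset.sum_nonneg fun k hk =>
      div_nonneg (mul_nonneg (hbnn k) (sq_nonneg _)) (by norm_num)
  have hst : s*(1-t) ≤ R := by linarith only [hRle, hQnn]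
  have hQR : Q ≤ R := by
    have g1 : (0:ℝ) ≤ s*(1-t) := mul_nonneg hs.le (by linarith only [htle])
    linarith only [hRle, g1]
  -- conclusion, coordinatewise
  rw [pi_norm_lt_iff hε]
  intro k
  rw [Pi.sub_apply, Real.norm_eq_abs]
  by_cases hk : k ∈ S
  · have hbk := hbposS k hk
    have h1 : b k * (zδ k - z₀ k)^2/4 ≤ Q := by
      rw [hQ_def]
      exact Finset.single_le_sum (f := fun j => b j * (zδ j - z₀ j)^2/4)
        (fun j _ => div_nonneg (mul_nonneg (hbnn j) (sq_nonneg _)) (by norm_num)) hk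
    have h2 : η ≤ bS*ε^2/8 := min_le_left _ _
    have h3 : bS ≤ b k := hbSle k hk
    have h4 : b k * (zδ k - z₀ k)^2/4 < bS*ε^2/8 := by linarith only [h1, hQR, hRη, h2]
    have h5a : bS*(zδ k - z₀ k)^2 ≤ b k*(zδ k - z₀ k)^2 :=
      mul_le_mul_of_nonneg_right h3 (sq_nonneg _)
    have h5b : bS*(zδ k - z₀ k)^2 < bS*(ε^2/2) := by linarith only [h4, h5a]
    have h5 : (zδ k - z₀ k)^2 < ε^2/2 := lt_of_mul_lt_mul_left h5b hbS0.le
    have h7 : (zδ k - z₀ k)^2 < ε^2 := by linarith only [h5, pow_pos hε 2]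
    exact abs_lt_of_sq_lt_sq h7 hε.le
  · have hb0k : b k = 0 := hb0 k hk
    have hz0k : z₀ k = 0 := by rw [hz₀k k, hb0k, zero_div]
    rw [hz0k, sub_zero, abs_of_nonneg (hznn k)]
    have h1 : t + zδ k ≤ 1 := by
      have e := Finset.sum_insert (f := fun j => zδ j) (s := S) hk
      have hle : ∑ j ∈ insert k S, zδ j ≤ ∑ j, zδ j :=
        Finset.sum_le_sum_of_subset_of_nonneg (Finset.subset_univ (insert k S))
          (fun j _ _ => hznn j)
      rw [e, hzsum] at hle
      rw [ht_def]
      linarith only [hle]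
    have h2 : η ≤ s*ε/2 := min_le_right _ _
    have h3 : s*(1-t) < s*(ε/2) := by linarith only [hst, hRη, h2]
    have h4 : 1 - t < ε/2 := lt_of_mul_lt_mul_left h3 hs.le
    linarith only [h1, h4, hε]
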